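/- Let u ∈ H¹(ℝ^N), u ≠ 0, a > 0, and define φ(t,x) = (1−at)^{−N/2} e^{−i a|x|²/(4(1−at))} e^{i t/(1−at)} u(x/(1−at)) for 0 ≤ t < 1/a. Then (1−at)‖∇φ(t,·)‖_{L²} → ‖∇u‖_{L²} as t ↑ 1/a; in particular ‖∇φ(t,·)‖_{L²} → ∞ as t ↑ 1/a (assuming ∇u ≠ 0 and x u ∈ L²). -/

import Mathlib

open MeasureTheory Real Filter Set
open scoped ENNReal NNReal

noncomputable section

/-- The pseudoconformally transformed standing-wave profile
`φ(t,x) = (1−at)^{−N/2} e^{−ia|x|²/(4(1−at))} e^{it/(1−at)} u(x/(1−at))`. -/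
def selfSimilar (N : ℕ) (a : ℝ) (u : EuclideanSpace ℝ (Fin N) → ℂ)
    (t : ℝ) (x : EuclideanSpace ℝ (Fin N)) : ℂ :=
  (((1 - a * t) ^ (-(N : ℝ) / 2) : ℝ) : ℂ) *
    Complex.exp (-Complex.I * (a : ℂ) * ((‖x‖ ^ 2 : ℝ) : ℂ) / (4 * ((1 - a * t : ℝ) : ℂ))) *
    Complex.exp (Complex.I * ((t / (1 - a * t) : ℝ) : ℂ)) *
    u ((1 - a * t)⁻¹ • x)

abbrev Esp (N : ℕ) := EuclideanSpace ℝ (Fin N)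

def Fmap (N : ℕ) (a l : ℝ) (u : Esp N → ℂ) (y : Esp N) : Esp N →L[ℝ] ℂ :=
  fderiv ℝ u y - (innerSL ℝ y).smulRight (Complex.I * ((a * l / 2 : ℝ) : ℂ) * u y)

theorem hasFDeriv_selfSimilar (N : ℕ) (a : ℝ) (u : Esp N → ℂ) (hdiff : Differentiable ℝ u)
    (t : ℝ) (hl : (1 - a * t) ≠ 0) (x : Esp N) :
    HasFDerivAt (selfSimilar N a u t)
      (((((1 - a * t) ^ (-(N : ℝ) / 2) : ℝ) : ℂ) *
        Complex.exp (-Complex.I * (a : ℂ) * ((‖x‖ ^ 2 : ℝ) : ℂ) / (4 * ((1 - a * t : ℝ) : ℂ))) *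
        Complex.exp (Complex.I * ((t / (1 - a * t) : ℝ) : ℂ))) •
        ((1 - a * t)⁻¹ • Fmap N a (1 - a * t) u ((1 - a * t)⁻¹ • x))) x := by
  have h1 : HasFDerivAt (fun x : Esp N => (‖x‖ ^ 2 : ℝ)) (2 • (innerSL ℝ x)) x := by
    simpa using (hasFDerivAt_id x).norm_sq
  have h2 : HasFDerivAt (fun x : Esp N => ((‖x‖ ^ 2 : ℝ) : ℂ))
      (Complex.ofRealCLM.comp (2 • (innerSL ℝ x))) x :=
    Complex.ofRealCLM.hasFDerivAt.comp x h1
  have h3 := ((h2.const_mul (-Complex.I * (a : ℂ))).mul_const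
      ((4 * ((1 - a * t : ℝ) : ℂ))⁻¹)).cexp
  have h5 : HasFDerivAt (fun x : Esp N => u ((1 - a * t)⁻¹ • x))
      ((fderiv ℝ u ((1 - a * t)⁻¹ • x)).comp
        ((1 - a * t)⁻¹ • ContinuousLinearMap.id ℝ (Esp N))) x :=
    (hdiff _).hasFDerivAt.comp x ((hasFDerivAt_id x).const_smul (1 - a * t)⁻¹)
  have htot := ((h3.const_mul ((((1 - a * t) ^ (-(N : ℝ) / 2) : ℝ) : ℂ))).mul_const
      (Complex.exp (Complex.I * ((t / (1 - a * t) : ℝ) : ℂ)))).mul h5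
  refine htot.congr_fderiv ?_
  ext v
  simp only [Fmap, ContinuousLinearMap.add_apply, ContinuousLinearMap.coe_smul',
    Pi.smul_apply, ContinuousLinearMap.coe_comp', Function.comp_apply,
    ContinuousLinearMap.smul_apply, ContinuousLinearMap.coe_sub',
    ContinuousLinearMap.smulRight_apply, ContinuousLinearMap.coe_id', id_eq,
    Complex.ofRealCLM_apply, innerSL_apply_apply, Pi.sub_apply, _root_.map_smul,
    real_inner_smul_left, smul_eq_mul, Complex.real_smul, Complex.ofReal_mul,
    Complex.ofReal_inv, Complex.ofReal_div, Complex.ofReal_ofNat, Complex.ofReal_sub,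
    Complex.ofReal_one]
  push_cast
  have hlc : ((1:ℂ) - a * t) ≠ 0 := by
    simpa using Complex.ofReal_ne_zero.mpr hl
  field_simp
  ring

theorem norm_phase (N : ℕ) (a t : ℝ) (hl : 0 < 1 - a * t) (x : Esp N) :
    ‖(((1 - a * t) ^ (-(N : ℝ) / 2) : ℝ) : ℂ) *
        Complex.exp (-Complex.I * (a : ℂ) * ((‖x‖ ^ 2 : ℝ) : ℂ) / (4 * ((1 - a * t : ℝ) : ℂ))) *
        Complex.exp (Complex.I * ((t / (1 - a * t) : ℝ) : ℂ))‖
      = (1 - a * t) ^ (-(N : ℝ) / 2) := by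
  have h1 : (-Complex.I * (a : ℂ) * ((‖x‖ ^ 2 : ℝ) : ℂ) / (4 * ((1 - a * t : ℝ) : ℂ)))
      = ((-(a * ‖x‖ ^ 2 / (4 * (1 - a * t))) : ℝ) : ℂ) * Complex.I := by
    have hlc : ((1 - a * t : ℝ) : ℂ) ≠ 0 := Complex.ofReal_ne_zero.mpr hl.ne'
    push_cast at hlc ⊢
    field_simp
  have h2 : (Complex.I * ((t / (1 - a * t) : ℝ) : ℂ))
      = ((t / (1 - a * t) : ℝ) : ℂ) * Complex.I := mul_comm _ _
  rw [h1, h2, norm_mul, norm_mul, Complex.norm_exp_ofReal_mul_I, Complex.norm_exp_ofReal_mul_I,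
    Complex.norm_real, Real.norm_eq_abs, mul_one, mul_one, abs_of_pos (Real.rpow_pos_of_pos hl _)]

theorem norm_fderiv_selfSimilar (N : ℕ) (a : ℝ) (u : Esp N → ℂ) (hdiff : Differentiable ℝ u)
    (t : ℝ) (hl : 0 < 1 - a * t) (x : Esp N) :
    ‖fderiv ℝ (selfSimilar N a u t) x‖
      = ((1 - a * t) ^ (-(N : ℝ) / 2) * (1 - a * t)⁻¹) *
        ‖Fmap N a (1 - a * t) u ((1 - a * t)⁻¹ • x)‖ := by
  rw [(hasFDeriv_selfSimilar N a u hdiff t hl.ne' x).fderiv]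
  have h1 := norm_smul ((((1 - a * t) ^ (-(N : ℝ) / 2) : ℝ) : ℂ) *
        Complex.exp (-Complex.I * (a : ℂ) * ((‖x‖ ^ 2 : ℝ) : ℂ) / (4 * ((1 - a * t : ℝ) : ℂ))) *
        Complex.exp (Complex.I * ((t / (1 - a * t) : ℝ) : ℂ)))
      ((1 - a * t)⁻¹ • Fmap N a (1 - a * t) u ((1 - a * t)⁻¹ • x))
  have h2 := norm_smul ((1 - a * t)⁻¹) (Fmap N a (1 - a * t) u ((1 - a * t)⁻¹ • x))
  refine h1.trans ?_
  rw [norm_phase N a t hl x, h2, Real.norm_eq_abs, abs_of_pos (inv_pos.mpr hl), mul_assoc]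

set_option maxHeartbeats 1000000 in
theorem continuous_Bterm (N : ℕ) (a l : ℝ) (u : Esp N → ℂ) (hu : Continuous u) :
    Continuous (fun y : Esp N =>
      (innerSL ℝ y).smulRight (Complex.I * ((a * l / 2 : ℝ) : ℂ) * u y)) := by
  exact ((ContinuousLinearMap.smulRightL ℝ (Esp N) ℂ).isBoundedBilinearMap.continuous).comp
    ((innerSL ℝ).continuous.prodMk (continuous_const.mul hu))

theorem aesm_Fmap (N : ℕ) (a l : ℝ) (u : Esp N → ℂ) (hu : Continuous u)
    (hg : AEStronglyMeasurable (fun x => fderiv ℝ u x)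
      (volume : Measure (Esp N))) (μ : Measure (Esp N)) (hμ : μ ≪ volume) :
    AEStronglyMeasurable (Fmap N a l u) μ := by
  have : AEStronglyMeasurable (Fmap N a l u) volume :=
    hg.sub (continuous_Bterm N a l u hu).aestronglyMeasurable
  exact this.mono_ac hμ

theorem eLpNorm_fderiv_selfSimilar (N : ℕ) (a : ℝ) (u : Esp N → ℂ)
    (hdiff : Differentiable ℝ u)
    (hg : AEStronglyMeasurable (fun x => fderiv ℝ u x) (volume : Measure (Esp N)))
    (t : ℝ) (hl : 0 < 1 - a * t) :
    eLpNorm (fun x => fderiv ℝ (selfSimilar N a u t) x) 2 volume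
      = ENNReal.ofReal (1 - a * t)⁻¹ * eLpNorm (Fmap N a (1 - a * t) u) 2 volume := by
  set l := 1 - a * t with hldef
  have hlinv : l⁻¹ ≠ 0 := inv_ne_zero hl.ne'
  have hmap : Measure.map (l⁻¹ • · : Esp N → Esp N) volume
      = ENNReal.ofReal (l ^ N) • (volume : Measure (Esp N)) := by
    rw [MeasureTheory.Measure.map_addHaar_smul volume hlinv]
    congr 1
    rw [finrank_euclideanSpace_fin]
    rw [abs_of_pos (by positivity : (0:ℝ) < (l⁻¹ ^ N)⁻¹)]
    rw [← inv_pow, inv_inv]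
  have hFa : AEStronglyMeasurable (Fmap N a l u)
      (Measure.map (l⁻¹ • · : Esp N → Esp N) volume) := by
    refine aesm_Fmap N a l u hdiff.continuous hg _ ?_
    rw [hmap]
    exact Measure.smul_absolutelyContinuous
  calc eLpNorm (fun x => fderiv ℝ (selfSimilar N a u t) x) 2 volume
      = eLpNorm (fun x => ‖fderiv ℝ (selfSimilar N a u t) x‖) 2 volume :=
        (eLpNorm_norm _).symm
    _ = eLpNorm ((l ^ (-(N : ℝ) / 2) * l⁻¹) •
          fun x => ‖Fmap N a l u (l⁻¹ • x)‖) 2 volume := by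
        congr 1
        funext x
        rw [norm_fderiv_selfSimilar N a u hdiff t hl x]
        simp [smul_eq_mul]
        rfl
    _ = (‖(l ^ (-(N : ℝ) / 2) * l⁻¹)‖₊ : ℝ≥0∞) *
          eLpNorm (fun x => ‖Fmap N a l u (l⁻¹ • x)‖) 2 volume :=
        eLpNorm_const_smul _ _ _ _
    _ = (‖(l ^ (-(N : ℝ) / 2) * l⁻¹)‖₊ : ℝ≥0∞) *
          eLpNorm (fun x => Fmap N a l u (l⁻¹ • x)) 2 volume := by
        rw [eLpNorm_norm]
    _ = (‖(l ^ (-(N : ℝ) / 2) * l⁻¹)‖₊ : ℝ≥0∞) *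
          eLpNorm (Fmap N a l u) 2 (Measure.map (l⁻¹ • · : Esp N → Esp N) volume) := by
        rw [eLpNorm_map_measure hFa (measurable_const_smul l⁻¹).aemeasurable]
        rfl
    _ = (‖(l ^ (-(N : ℝ) / 2) * l⁻¹)‖₊ : ℝ≥0∞) * (ENNReal.ofReal (l ^ N)) ^ ((1 / (2:ℝ≥0∞)).toReal) *
          eLpNorm (Fmap N a l u) 2 volume := by
        rw [hmap, eLpNorm_smul_measure_of_ne_top (by norm_num : (2:ℝ≥0∞) ≠ ∞),
          smul_eq_mul, mul_assoc]
    _ = ENNReal.ofReal l⁻¹ * eLpNorm (Fmap N a l u) 2 volume := by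
        congr 1
        have h2 : ((1 / (2:ℝ≥0∞)).toReal) = (1/2 : ℝ) := by simp
        rw [h2]
        have hc : (0:ℝ) < l ^ (-(N : ℝ) / 2) * l⁻¹ := by positivity
        rw [← enorm_eq_nnnorm, Real.enorm_eq_ofReal hc.le,
          ENNReal.ofReal_rpow_of_pos (by positivity : (0:ℝ) < l ^ N),
          ← ENNReal.ofReal_mul hc.le]
        congr 1
        rw [← Real.rpow_natCast l N, ← Real.rpow_mul hl.le, mul_right_comm,
          ← Real.rpow_add hl, show (-(N:ℝ)/2 + (N:ℝ)*(1/2)) = 0 by ring,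
          Real.rpow_zero, one_mul]

theorem eLpNorm_Bterm (N : ℕ) (a l : ℝ) (u : Esp N → ℂ) (hal : 0 ≤ a * l / 2) :
    eLpNorm (fun y : Esp N =>
        (innerSL ℝ y).smulRight (Complex.I * ((a * l / 2 : ℝ) : ℂ) * u y)) 2 volume
      = ENNReal.ofReal (a * l / 2) * eLpNorm (fun y : Esp N => ‖y‖ * ‖u y‖) 2 volume := by
  calc eLpNorm (fun y : Esp N =>
        (innerSL ℝ y).smulRight (Complex.I * ((a * l / 2 : ℝ) : ℂ) * u y)) 2 volume
      = eLpNorm (fun y : Esp N =>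
          ‖(innerSL ℝ y).smulRight (Complex.I * ((a * l / 2 : ℝ) : ℂ) * u y)‖) 2 volume :=
        (eLpNorm_norm _).symm
    _ = eLpNorm ((a * l / 2) • fun y : Esp N => ‖y‖ * ‖u y‖) 2 volume := by
        congr 1
        funext y
        rw [ContinuousLinearMap.norm_smulRight_apply, innerSL_apply_norm]
        simp only [norm_mul, Complex.norm_I, one_mul, Complex.norm_real,
          Real.norm_eq_abs, abs_of_nonneg hal, Pi.smul_apply, smul_eq_mul]
        ring
    _ = ENNReal.ofReal (a * l / 2) * eLpNorm (fun y : Esp N => ‖y‖ * ‖u y‖) 2 volume := by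
        rw [eLpNorm_const_smul, Real.enorm_eq_ofReal hal]

theorem abs_toReal_sub_le {X Y Z : ℝ≥0∞} (hY : Y ≠ ∞) (hZ : Z ≠ ∞)
    (h1 : X ≤ Y + Z) (h2 : Y ≤ X + Z) : |X.toReal - Y.toReal| ≤ Z.toReal := by
  have hX : X ≠ ∞ := by
    intro h
    rw [h] at h1
    exact (ENNReal.add_lt_top.mpr ⟨hY.lt_top, hZ.lt_top⟩).ne (top_le_iff.mp h1)
  have t1 : X.toReal ≤ Y.toReal + Z.toReal := by
    rw [← ENNReal.toReal_add hY hZ]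
    exact ENNReal.toReal_mono (by finiteness) h1
  have t2 : Y.toReal ≤ X.toReal + Z.toReal := by
    rw [← ENNReal.toReal_add hX hZ]
    exact ENNReal.toReal_mono (by finiteness) h2
  rw [abs_sub_le_iff]
  constructor <;> linarith

/-- `(1−at)‖∇φ(t)‖₂ → ‖∇u‖₂` as `t ↑ 1/a`, and in particular
`‖∇φ(t)‖₂ → ∞` as `t ↑ 1/a` (assuming `∇u ≠ 0` and `x u ∈ L²`). -/
theorem stmt14 (N : ℕ) (hN : 1 ≤ N) (a : ℝ) (ha : 0 < a)
    (u : EuclideanSpace ℝ (Fin N) → ℂ) (hu0 : u ≠ 0)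
    (hdiff : Differentiable ℝ u)
    (hmem : MemLp u 2 (volume : Measure (EuclideanSpace ℝ (Fin N))))
    (hgradmem : MemLp (fun x => fderiv ℝ u x) 2
      (volume : Measure (EuclideanSpace ℝ (Fin N))))
    (hgrad0 : eLpNorm (fun x => fderiv ℝ u x) 2
      (volume : Measure (EuclideanSpace ℝ (Fin N))) ≠ 0)
    (hmom : Integrable (fun x : EuclideanSpace ℝ (Fin N) => ‖x‖ ^ 2 * ‖u x‖ ^ 2) volume) :
    Tendsto
        (fun t => (1 - a * t) *
          (eLpNorm (fun x => fderiv ℝ (selfSimilar N a u t) x) 2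
            (volume : Measure (EuclideanSpace ℝ (Fin N)))).toReal)
        (nhdsWithin (1 / a) (Iio (1 / a)))
        (nhds (eLpNorm (fun x => fderiv ℝ u x) 2
          (volume : Measure (EuclideanSpace ℝ (Fin N)))).toReal) ∧
      Tendsto
        (fun t => (eLpNorm (fun x => fderiv ℝ (selfSimilar N a u t) x) 2
          (volume : Measure (EuclideanSpace ℝ (Fin N)))).toReal)
        (nhdsWithin (1 / a) (Iio (1 / a))) atTop := by
  have hucont : Continuous u := hdiff.continuous
  set L : ℝ≥0∞ := eLpNorm (fun x => fderiv ℝ u x) 2 volume with hLdef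
  have hLfin : L ≠ ∞ := hgradmem.2.ne
  have hLpos : 0 < L.toReal := ENNReal.toReal_pos hgrad0 hLfin
  -- the moment function
  have hgmem : MemLp (fun y : Esp N => ‖y‖ * ‖u y‖) 2 volume := by
    refine (memLp_two_iff_integrable_sq
      ((continuous_norm.mul hucont.norm).aestronglyMeasurable)).mpr ?_
    have : (fun y : Esp N => (‖y‖ * ‖u y‖) ^ 2) = fun y : Esp N => ‖y‖ ^ 2 * ‖u y‖ ^ 2 := by
      funext y; ring
    simp only [Pi.mul_apply]
    rw [this]
    exact hmom
  set m : ℝ := (eLpNorm (fun y : Esp N => ‖y‖ * ‖u y‖) 2 volume).toReal with hmdef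
  -- positivity of 1 - a t on Iio (1/a)
  have hlpos : ∀ t ∈ Iio (1 / a), 0 < 1 - a * t := by
    intro t ht
    have : a * t < 1 := by
      have := (mul_lt_mul_iff_right₀ ha).mpr (show t < 1/a from ht)
      rwa [mul_one_div_cancel ha.ne'] at this
    linarith
  -- B term memℒp and Fmap memℒp, and the key bound, for each t < 1/a
  have key : ∀ t ∈ Iio (1 / a),
      |(eLpNorm (Fmap N a (1 - a * t) u) 2 volume).toReal - L.toReal|
        ≤ (1 - a * t) * (a * m / 2) := by
    intro t ht
    have hl := hlpos t ht
    set l := 1 - a * t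
    have hal : 0 ≤ a * l / 2 := by positivity
    set B : Esp N → (Esp N →L[ℝ] ℂ) := fun y =>
      (innerSL ℝ y).smulRight (Complex.I * ((a * l / 2 : ℝ) : ℂ) * u y) with hBdef
    have hBcont : Continuous B := continuous_Bterm N a l u hucont
    have hBn : eLpNorm B 2 volume
        = ENNReal.ofReal (a * l / 2) * eLpNorm (fun y : Esp N => ‖y‖ * ‖u y‖) 2 volume :=
      eLpNorm_Bterm N a l u hal
    have hBfin : eLpNorm B 2 volume ≠ ∞ := by
      rw [hBn]
      exact (ENNReal.mul_lt_top ENNReal.ofReal_lt_top hgmem.2).ne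
    have hFeq : Fmap N a l u = (fun x => fderiv ℝ u x) - B := rfl
    have h1 : eLpNorm (Fmap N a l u) 2 volume ≤ L + eLpNorm B 2 volume := by
      rw [hFeq]
      exact eLpNorm_sub_le hgradmem.1 hBcont.aestronglyMeasurable one_le_two
    have h2 : L ≤ eLpNorm (Fmap N a l u) 2 volume + eLpNorm B 2 volume := by
      have : (fun x => fderiv ℝ u x) = Fmap N a l u + B := by
        funext y
        simp [hFeq]
      rw [hLdef, this]
      exact eLpNorm_add_le (f := Fmap N a l u) (g := B) ((aesm_Fmap N a l u hucont hgradmem.1 volume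
        Measure.AbsolutelyContinuous.rfl)) hBcont.aestronglyMeasurable one_le_two
    have := abs_toReal_sub_le hLfin hBfin h1 h2
    refine this.trans ?_
    rw [hBn, ENNReal.toReal_mul, ENNReal.toReal_ofReal hal, ← hmdef]
    apply le_of_eq
    ring
  -- the product identity on Iio (1/a)
  have prodid : ∀ t ∈ Iio (1 / a),
      (1 - a * t) * (eLpNorm (fun x => fderiv ℝ (selfSimilar N a u t) x) 2 volume).toReal
        = (eLpNorm (Fmap N a (1 - a * t) u) 2 volume).toReal := by
    intro t ht
    have hl := hlpos t ht
    rw [eLpNorm_fderiv_selfSimilar N a u hdiff hgradmem.1 t hl, ENNReal.toReal_mul,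
      ENNReal.toReal_ofReal (inv_pos.mpr hl).le, ← mul_assoc,
      mul_inv_cancel₀ hl.ne', one_mul]
  -- tendsto of 1 - a t to 0 within
  have hlt0 : Tendsto (fun t => 1 - a * t) (nhdsWithin (1/a) (Iio (1/a))) (nhds 0) := by
    have : Tendsto (fun t => 1 - a * t) (nhds (1/a)) (nhds (1 - a * (1/a))) := by
      exact (continuous_const.sub (continuous_const.mul continuous_id)).tendsto _
    rw [mul_one_div_cancel ha.ne', sub_self] at this
    exact this.mono_left nhdsWithin_le_nhds
  -- part 1
  have part1 : Tendsto
      (fun t => (1 - a * t) *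
        (eLpNorm (fun x => fderiv ℝ (selfSimilar N a u t) x) 2 volume).toReal)
      (nhdsWithin (1 / a) (Iio (1 / a))) (nhds L.toReal) := by
    rw [tendsto_iff_dist_tendsto_zero]
    have hbound : Tendsto (fun t => (1 - a * t) * (a * m / 2))
        (nhdsWithin (1/a) (Iio (1/a))) (nhds 0) := by
      simpa using hlt0.mul_const (a * m / 2)
    refine squeeze_zero' ?_ ?_ hbound
    · exact Eventually.of_forall fun t => dist_nonneg
    · filter_upwards [self_mem_nhdsWithin] with t ht
      rw [Real.dist_eq, prodid t ht]
      exact key t ht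
  refine ⟨part1, ?_⟩
  -- part 2
  have hinv : Tendsto (fun t => (1 - a * t)⁻¹)
      (nhdsWithin (1/a) (Iio (1/a))) atTop := by
    refine tendsto_inv_nhdsGT_zero.comp ?_
    rw [tendsto_nhdsWithin_iff]
    refine ⟨hlt0, ?_⟩
    filter_upwards [self_mem_nhdsWithin] with t ht
    exact hlpos t ht
  have := hinv.atTop_mul_pos hLpos part1
  refine this.congr' ?_
  filter_upwards [self_mem_nhdsWithin] with t ht
  have hl := hlpos t ht
  field_simp
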